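/- Every subset of ℝ that is homeomorphic to the Cantor space is order isomorphic (with the order induced from ℝ) to the Cantor space equipped with the lexicographic order. -/
import Mathlib

open Set

noncomputable section

namespace RealCantorAux

/-- A good split point for a compact set `K ⊆ ℝ`. -/
def GoodSplit (K : Set ℝ) (c : ℝ) : Prop :=
  c ∉ K ∧ (K ∩ Iio c).Nonempty ∧ (K ∩ Ioi c).Nonempty ∧
  sSup (K ∩ Iio c) - sInf (K ∩ Iio c) ≤ 3/4 * (sSup K - sInf K) ∧
  sSup (K ∩ Ioi c) - sInf (K ∩ Ioi c) ≤ 3/4 * (sSup K - sInf K)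

open Classical in
def splitPt (K : Set ℝ) : ℝ := if h : ∃ c, GoodSplit K c then h.choose else 0

lemma splitPt_spec {K : Set ℝ} (h : ∃ c, GoodSplit K c) : GoodSplit K (splitPt K) := by
  classical
  rw [splitPt]
  rw [dif_pos h]
  exact h.choose_spec

lemma abs_sub_le_of_mem {K : Set ℝ} (hK : IsCompact K) {y z : ℝ} (hy : y ∈ K) (hz : z ∈ K) :
    |y - z| ≤ sSup K - sInf K := by
  have h1 := le_csSup hK.bddAbove hy
  have h2 := le_csSup hK.bddAbove hz
  have h3 := csInf_le hK.bddBelow hy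
  have h4 := csInf_le hK.bddBelow hz
  rw [abs_sub_le_iff]; constructor <;> linarith

lemma goodSplit_of {K : Set ℝ} (hKc : IsCompact K) {c : ℝ} (X Y : ℝ)
    (hcK : c ∉ K) {xl : ℝ} (hxl : xl ∈ K) (hxlc : xl < c)
    {xr : ℝ} (hxr : xr ∈ K) (hcxr : c < xr)
    (hX : ∀ k ∈ K, k < c → k ≤ X) (hY : ∀ k ∈ K, c < k → Y ≤ k)
    (hXb : X - sInf K ≤ 3/4 * (sSup K - sInf K))
    (hYb : sSup K - Y ≤ 3/4 * (sSup K - sInf K)) : GoodSplit K c := by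
  have hLne : (K ∩ Iio c).Nonempty := ⟨xl, hxl, hxlc⟩
  have hRne : (K ∩ Ioi c).Nonempty := ⟨xr, hxr, hcxr⟩
  refine ⟨hcK, hLne, hRne, ?_, ?_⟩
  · have h1 : sSup (K ∩ Iio c) ≤ X := csSup_le hLne fun k hk => hX k hk.1 hk.2
    have h2 : sInf K ≤ sInf (K ∩ Iio c) :=
      le_csInf hLne fun k hk => csInf_le hKc.bddBelow hk.1
    linarith
  · have h1 : Y ≤ sInf (K ∩ Ioi c) := le_csInf hRne fun k hk => hY k hk.1 hk.2
    have h2 : sSup (K ∩ Ioi c) ≤ sSup K :=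
      csSup_le hRne fun k hk => le_csSup hKc.bddAbove hk.1
    linarith

lemma exists_goodSplit {A : Set ℝ}
    (hP : ∀ x ∈ A, ∀ ε > 0, ∃ y ∈ A, y ≠ x ∧ |y - x| < ε)
    (hT : ∀ a ∈ A, ∀ b ∈ A, a < b → ∃ c, a < c ∧ c < b ∧ c ∉ A)
    {K : Set ℝ} (hKc : IsCompact K) (hne : K.Nonempty)
    {U : Set ℝ} (hU : IsOpen U) (hKU : K = A ∩ U) :
    ∃ c, GoodSplit K c := by
  set i := sInf K with hidef
  set s := sSup K with hsdef
  have hiK : i ∈ K := hKc.sInf_mem hne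
  have hsK : s ∈ K := hKc.sSup_mem hne
  -- K has two points, hence i < s
  have his : i < s := by
    have hiAU : i ∈ A ∩ U := hKU ▸ hiK
    obtain ⟨ε, hε, hball⟩ := Metric.isOpen_iff.1 hU i hiAU.2
    obtain ⟨y, hyA, hyne, hyd⟩ := hP i hiAU.1 ε hε
    have hyK : y ∈ K := by
      rw [hKU]; exact ⟨hyA, hball (by simpa [Real.dist_eq] using hyd)⟩
    have h1 : i ≤ y := csInf_le hKc.bddBelow hyK
    have h2 : y ≤ s := le_csSup hKc.bddAbove hyK
    rcases lt_or_eq_of_le h1 with h | h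
    · linarith
    · exact absurd h.symm hyne
  have hd : (0:ℝ) < s - i := by linarith
  set m := (i + s) / 2 with hmdef
  have him : i < m := by rw [hmdef]; linarith
  have hms : m < s := by rw [hmdef]; linarith
  set KL := K ∩ Iic m with hKL
  set KR := K ∩ Ici m with hKR
  have hKLc : IsCompact KL := hKc.inter_right isClosed_Iic
  have hKRc : IsCompact KR := hKc.inter_right isClosed_Ici
  have hKLne : KL.Nonempty := ⟨i, hiK, le_of_lt him⟩
  have hKRne : KR.Nonempty := ⟨s, hsK, le_of_lt hms⟩
  set a := sSup KL with hadef
  set b := sInf KR with hbdef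
  have haKL : a ∈ KL := hKLc.sSup_mem hKLne
  have hbKR : b ∈ KR := hKRc.sInf_mem hKRne
  have hia : i ≤ a := le_csSup hKLc.bddAbove ⟨hiK, le_of_lt him⟩
  have ham : a ≤ m := haKL.2
  have hmb : m ≤ b := hbKR.2
  have hbs : b ≤ s := le_csSup hKc.bddAbove hbKR.1
  rcases lt_or_ge a b with hab | hba
  · -- gap around the middle: take c = (a+b)/2
    set c := (a + b) / 2 with hcdef
    have hac : a < c := by rw [hcdef]; linarith
    have hcb : c < b := by rw [hcdef]; linarith
    have hcK : c ∉ K := by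
      intro hcmem
      rcases le_total c m with h | h
      · exact absurd (le_csSup hKLc.bddAbove ⟨hcmem, h⟩) (not_le.2 hac)
      · exact absurd (csInf_le hKRc.bddBelow ⟨hcmem, h⟩) (not_le.2 hcb)
    refine ⟨c, goodSplit_of hKc a b hcK haKL.1 hac hbKR.1 hcb ?_ ?_ ?_ ?_⟩
    · intro k hk hkc
      rcases le_total k m with h | h
      · exact le_csSup hKLc.bddAbove ⟨hk, h⟩
      · exact absurd (csInf_le hKRc.bddBelow ⟨hk, h⟩) (not_le.2 (lt_trans hkc hcb))
    · intro k hk hck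
      rcases le_total k m with h | h
      · exact absurd (le_csSup hKLc.bddAbove ⟨hk, h⟩) (not_le.2 (lt_trans hac hck))
      · exact csInf_le hKRc.bddBelow ⟨hk, h⟩
    · rw [hmdef] at ham; linarith
    · rw [hmdef] at hmb; linarith
  · -- a = m = b, so m ∈ K; use perfectness to find a nearby point and a gap
    have ham' : a = m := le_antisymm ham (hmb.trans hba)
    have hmK : m ∈ K := ham' ▸ haKL.1
    have hmAU : m ∈ A ∩ U := hKU ▸ hmK
    obtain ⟨ε, hε, hball⟩ := Metric.isOpen_iff.1 hU m hmAU.2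
    obtain ⟨y, hyA, hyne, hyd⟩ := hP m hmAU.1 (min ((s - i)/8) ε)
      (lt_min (by linarith) hε)
    have hyd8 : |y - m| < (s - i) / 8 := lt_of_lt_of_le hyd (min_le_left _ _)
    have hyK : y ∈ K := by
      rw [hKU]
      exact ⟨hyA, hball (by simpa [Real.dist_eq] using lt_of_lt_of_le hyd (min_le_right _ _))⟩
    have hiy : i ≤ y := csInf_le hKc.bddBelow hyK
    have hys : y ≤ s := le_csSup hKc.bddAbove hyK
    rcases hyne.lt_or_gt with hym | hmy
    · -- y < m
      obtain ⟨c, hyc, hcm, hcA⟩ := hT y hyA m hmAU.1 hym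
      have hcK : c ∉ K := fun hc => hcA (hKU ▸ hc).1
      refine ⟨c, goodSplit_of hKc c y hcK hyK hyc hmK hcm ?_ ?_ ?_ ?_⟩
      · exact fun k _ hk => le_of_lt hk
      · exact fun k _ hk => le_of_lt (lt_trans hyc hk)
      · have : c ≤ m := le_of_lt hcm
        rw [hmdef] at this; linarith
      · have : m - (s-i)/8 < y := by
          have := abs_lt.1 hyd8; linarith [this.1]
        rw [hmdef] at this; linarith
    · -- m < y
      obtain ⟨c, hmc, hcy, hcA⟩ := hT m hmAU.1 y hyA hmy
      have hcK : c ∉ K := fun hc => hcA (hKU ▸ hc).1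
      refine ⟨c, goodSplit_of hKc y c hcK hmK hmc hyK hcy ?_ ?_ ?_ ?_⟩
      · exact fun k _ hk => le_of_lt (lt_trans hk hcy)
      · exact fun k _ hk => le_of_lt hk
      · have : y < m + (s-i)/8 := by
          have := abs_lt.1 hyd8; linarith [this.2]
        rw [hmdef] at this; linarith
      · have : m ≤ c := le_of_lt hmc
        rw [hmdef] at this; linarith

def cantorPiece (A : Set ℝ) : List Bool → Set ℝ
  | [] => A
  | b :: s =>
      if b then cantorPiece A s ∩ Ioi (splitPt (cantorPiece A s))
      else cantorPiece A s ∩ Iio (splitPt (cantorPiece A s))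

/-- The prefix (in reversed list form) of length `n` of `x`. -/
def pref (x : ℕ → Bool) : ℕ → List Bool
  | 0 => []
  | n + 1 => x n :: pref x n

lemma pref_congr {x y : ℕ → Bool} {n : ℕ} (h : ∀ j < n, x j = y j) :
    pref x n = pref y n := by
  induction n with
  | zero => rfl
  | succ n ih =>
      simp only [pref, h n (Nat.lt_succ_self n),
        ih fun j hj => h j (Nat.lt_succ_of_lt hj)]

variable {A : Set ℝ}
  (hP : ∀ x ∈ A, ∀ ε > 0, ∃ y ∈ A, y ≠ x ∧ |y - x| < ε)
  (hT : ∀ a ∈ A, ∀ b ∈ A, a < b → ∃ c, a < c ∧ c < b ∧ c ∉ A)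
  (hA : IsCompact A) (hAne : A.Nonempty)

include hP hT hA hAne in
lemma cantorPiece_invariant (s : List Bool) :
    (cantorPiece A s).Nonempty ∧ IsCompact (cantorPiece A s) ∧
      (∃ U, IsOpen U ∧ cantorPiece A s = A ∩ U) ∧
      sSup (cantorPiece A s) - sInf (cantorPiece A s) ≤
        (3/4) ^ s.length * (sSup A - sInf A) := by
  induction s with
  | nil =>
      exact ⟨hAne, hA, ⟨univ, isOpen_univ, (inter_univ A).symm⟩, by simp [cantorPiece]⟩
  | cons b s ih =>
      obtain ⟨hne, hKc, ⟨U, hU, hKU⟩, hbd⟩ := ih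
      have hex : ∃ c, GoodSplit (cantorPiece A s) c :=
        exists_goodSplit hP hT hKc hne hU hKU
      obtain ⟨hcK, hLne, hRne, hLbd, hRbd⟩ := splitPt_spec hex
      set K := cantorPiece A s
      set c := splitPt K
      have hdnn : (0:ℝ) ≤ sSup K - sInf K := by
        obtain ⟨k, hk⟩ := hne
        have := le_csSup hKc.bddAbove hk
        have := csInf_le hKc.bddBelow hk
        linarith
      have hbd' : 3/4 * (sSup K - sInf K) ≤ (3/4) ^ (b :: s).length * (sSup A - sInf A) := by
        calc 3/4 * (sSup K - sInf K) ≤ 3/4 * ((3/4) ^ s.length * (sSup A - sInf A)) := by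
              apply mul_le_mul_of_nonneg_left hbd (by norm_num)
          _ = (3/4) ^ (b :: s).length * (sSup A - sInf A) := by
              rw [List.length_cons, pow_succ]; ring
      have hLclosed : K ∩ Iio c = K ∩ Iic c := by
        ext k
        simp only [mem_inter_iff, mem_Iio, mem_Iic]
        exact ⟨fun h => ⟨h.1, le_of_lt h.2⟩,
          fun h => ⟨h.1, lt_of_le_of_ne h.2 (fun he => hcK (he ▸ h.1))⟩⟩
      have hRclosed : K ∩ Ioi c = K ∩ Ici c := by
        ext k
        simp only [mem_inter_iff, mem_Ioi, mem_Ici]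
        exact ⟨fun h => ⟨h.1, le_of_lt h.2⟩,
          fun h => ⟨h.1, lt_of_le_of_ne h.2 (fun he => hcK (he.symm ▸ h.1))⟩⟩
      cases b with
      | false =>
          refine ⟨by simpa [cantorPiece] using hLne, ?_, ?_, ?_⟩
          · show IsCompact (K ∩ Iio c)
            rw [hLclosed]; exact hKc.inter_right isClosed_Iic
          · exact ⟨U ∩ Iio c, hU.inter isOpen_Iio, by
              show K ∩ Iio c = A ∩ (U ∩ Iio c)
              rw [hKU, inter_assoc]⟩
          · show sSup (K ∩ Iio c) - sInf (K ∩ Iio c) ≤ _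
            exact hLbd.trans hbd'
      | true =>
          refine ⟨by simpa [cantorPiece] using hRne, ?_, ?_, ?_⟩
          · show IsCompact (K ∩ Ioi c)
            rw [hRclosed]; exact hKc.inter_right isClosed_Ici
          · exact ⟨U ∩ Ioi c, hU.inter isOpen_Ioi, by
              show K ∩ Ioi c = A ∩ (U ∩ Ioi c)
              rw [hKU, inter_assoc]⟩
          · show sSup (K ∩ Ioi c) - sInf (K ∩ Ioi c) ≤ _
            exact hRbd.trans hbd'

include hP hT hA hAne in
lemma goodSplit_cantorPiece (s : List Bool) :
    GoodSplit (cantorPiece A s) (splitPt (cantorPiece A s)) := by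
  obtain ⟨hne, hKc, ⟨U, hU, hKU⟩, -⟩ := cantorPiece_invariant hP hT hA hAne s
  exact splitPt_spec (exists_goodSplit hP hT hKc hne hU hKU)

lemma cantorPiece_cons_false (A : Set ℝ) (s : List Bool) :
    cantorPiece A (false :: s) =
      cantorPiece A s ∩ Iio (splitPt (cantorPiece A s)) := by
  simp [cantorPiece]

lemma cantorPiece_cons_true (A : Set ℝ) (s : List Bool) :
    cantorPiece A (true :: s) =
      cantorPiece A s ∩ Ioi (splitPt (cantorPiece A s)) := by
  simp [cantorPiece]

lemma pref_length (x : ℕ → Bool) (n : ℕ) : (pref x n).length = n := by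
  induction n with
  | zero => rfl
  | succ n ih => simp [pref, ih]

lemma cantorPiece_cons_subset (A : Set ℝ) (b : Bool) (s : List Bool) :
    cantorPiece A (b :: s) ⊆ cantorPiece A s := by
  cases b <;> simp only [cantorPiece, if_true, if_false, Bool.false_eq_true] <;>
    exact inter_subset_left

end RealCantorAux

/-- Every subset of `ℝ` that is homeomorphic to the Cantor space is order isomorphic (with the
order induced from `ℝ`) to the Cantor space equipped with the lexicographic order. -/
theorem real_cantor_subset_orderIso_lex
    (A : Set ℝ) (h : Nonempty (A ≃ₜ (ℕ → Bool))) :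
    Nonempty (A ≃o Lex (ℕ → Bool)) := by
  classical
  obtain ⟨e⟩ := h
  haveI hcs : CompactSpace ↥A := e.symm.compactSpace
  have hA : IsCompact A := isCompact_iff_compactSpace.mpr hcs
  have hAne : A.Nonempty := ⟨(e.symm fun _ => false).1, (e.symm fun _ => false).2⟩
  -- A has no isolated points
  have hP : ∀ x ∈ A, ∀ ε > 0, ∃ y ∈ A, y ≠ x ∧ |y - x| < ε := by
    intro x hx ε hε
    set z := e ⟨x, hx⟩ with hz
    set w : ℕ → (ℕ → Bool) := fun k => Function.update z k (!z k) with hw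
    have hwz : ∀ k, w k ≠ z := by
      intro k hk
      have h1 : w k k = z k := congrFun hk k
      rw [hw] at h1
      simp at h1
    have htend : Filter.Tendsto w Filter.atTop (nhds z) := by
      rw [tendsto_pi_nhds]
      intro j
      have hev : (fun k => w k j) =ᶠ[Filter.atTop] fun _ => z j := by
        filter_upwards [Filter.eventually_gt_atTop j] with k hk
        exact Function.update_of_ne (ne_of_lt hk) _ _
      exact (Filter.tendsto_congr' hev).2 tendsto_const_nhds
    have htend2 : Filter.Tendsto (fun k => ((e.symm (w k) : A) : ℝ))
        Filter.atTop (nhds x) := by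
      have h1 : Filter.Tendsto (fun k => e.symm (w k)) Filter.atTop (nhds (e.symm z)) :=
        (e.symm.continuous.tendsto z).comp htend
      have h2 : e.symm z = ⟨x, hx⟩ := by rw [hz]; simp
      rw [h2] at h1
      exact (continuous_subtype_val.tendsto _).comp h1
    rw [Metric.tendsto_atTop] at htend2
    obtain ⟨N, hN⟩ := htend2 ε hε
    refine ⟨(e.symm (w N) : ℝ), (e.symm (w N)).2, ?_, ?_⟩
    · intro hyx
      have : e.symm (w N) = ⟨x, hx⟩ := Subtype.ext hyx
      have h2 : e.symm z = ⟨x, hx⟩ := by rw [hz]; simp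
      exact hwz N (e.symm.injective (this.trans h2.symm))
    · have := hN N le_rfl
      rwa [Real.dist_eq] at this
  -- A is totally disconnected
  haveI htds : TotallyDisconnectedSpace ↥A :=
    ⟨e.isEmbedding.isTotallyDisconnected
      (isTotallyDisconnected_of_totallyDisconnectedSpace _)⟩
  have htd : IsTotallyDisconnected A := totallyDisconnectedSpace_subtype_iff.1 htds
  have hT : ∀ a ∈ A, ∀ b ∈ A, a < b → ∃ c, a < c ∧ c < b ∧ c ∉ A := by
    intro a ha b hb hab
    by_contra hcon
    push_neg at hcon
    have hsub : Icc a b ⊆ A := by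
      intro c hc
      rcases eq_or_lt_of_le hc.1 with rfl | h1
      · exact ha
      rcases eq_or_lt_of_le hc.2 with rfl | h2
      · exact hb
      exact hcon c h1 h2
    have hsing := htd (Icc a b) hsub isPreconnected_Icc
    exact absurd (hsing (left_mem_Icc.2 hab.le) (right_mem_Icc.2 hab.le)) (ne_of_lt hab)
  -- the piece machinery
  have key := fun s => RealCantorAux.cantorPiece_invariant hP hT hA hAne s
  have gs := fun s => RealCantorAux.goodSplit_cantorPiece hP hT hA hAne s
  set CP := RealCantorAux.cantorPiece A with hCP
  set pr := RealCantorAux.pref with hpr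
  have hnested : ∀ (x : ℕ → Bool) (n : ℕ), CP (pr x (n + 1)) ⊆ CP (pr x n) :=
    fun x n => RealCantorAux.cantorPiece_cons_subset A (x n) (pr x n)
  have hinter : ∀ x : ℕ → Bool, ∃ y, ∀ n, y ∈ CP (pr x n) := by
    intro x
    obtain ⟨y, hy⟩ := IsCompact.nonempty_iInter_of_sequence_nonempty_isCompact_isClosed
      (fun n => CP (pr x n)) (hnested x) (fun n => (key _).1)
      (key _).2.1 (fun n => (key _).2.1.isClosed)
    exact ⟨y, fun n => mem_iInter.1 hy n⟩
  choose f hf using hinter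
  have huniq : ∀ (x : ℕ → Bool) (y z : ℝ),
      (∀ n, y ∈ CP (pr x n)) → (∀ n, z ∈ CP (pr x n)) → y = z := by
    intro x y z hy hz
    have hb : ∀ n, |y - z| ≤ (3/4) ^ n * (sSup A - sInf A) := by
      intro n
      have h1 := RealCantorAux.abs_sub_le_of_mem (key (pr x n)).2.1 (hy n) (hz n)
      have h2 := (key (pr x n)).2.2.2
      rw [RealCantorAux.pref_length] at h2
      linarith
    have hlim : Filter.Tendsto (fun n => (3/4 : ℝ) ^ n * (sSup A - sInf A))
        Filter.atTop (nhds 0) := by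
      have := tendsto_pow_atTop_nhds_zero_of_lt_one
        (by norm_num : (0:ℝ) ≤ 3/4) (by norm_num : (3/4 : ℝ) < 1)
      simpa using this.mul_const (sSup A - sInf A)
    have h0 : |y - z| ≤ 0 := ge_of_tendsto' hlim hb
    exact sub_eq_zero.1 (abs_eq_zero.1 (le_antisymm h0 (abs_nonneg _)))
  have hfA : ∀ x : ℕ → Bool, f x ∈ A := fun x => hf x 0
  set g : Lex (ℕ → Bool) → ↥A := fun x => ⟨f (ofLex x), hfA (ofLex x)⟩ with hg
  have hmono : StrictMono g := by
    intro x y hxy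
    obtain ⟨i, hj, hi⟩ := hxy
    obtain ⟨hxf, hyt⟩ := Bool.lt_iff.1 hi
    have hpe : pr (ofLex x) i = pr (ofLex y) i :=
      RealCantorAux.pref_congr fun j hjlt => hj j hjlt
    have hfx : f (ofLex x) ∈ CP (pr (ofLex x) (i + 1)) := hf _ (i + 1)
    have hfy : f (ofLex y) ∈ CP (pr (ofLex y) (i + 1)) := hf _ (i + 1)
    have hex : pr (ofLex x) (i + 1) = false :: pr (ofLex x) i := by
      show (ofLex x) i :: pr (ofLex x) i = _
      rw [show ofLex x i = false from hxf]
    have hey : pr (ofLex y) (i + 1) = true :: pr (ofLex x) i := by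
      show (ofLex y) i :: pr (ofLex y) i = _
      rw [show ofLex y i = true from hyt, hpe]
    rw [hex, hCP, RealCantorAux.cantorPiece_cons_false] at hfx
    rw [hey, hCP, RealCantorAux.cantorPiece_cons_true] at hfy
    exact Subtype.mk_lt_mk.2 (lt_trans hfx.2 hfy.2)
  have hsurj : Function.Surjective g := by
    rintro ⟨a, ha⟩
    set l : ℕ → List Bool := fun n =>
      Nat.rec [] (fun _ s => decide (RealCantorAux.splitPt (CP s) < a) :: s) n with hl
    set x : ℕ → Bool := fun n => decide (RealCantorAux.splitPt (CP (l n)) < a) with hx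
    have hlp : ∀ n, pr x n = l n := by
      intro n
      induction n with
      | zero => rfl
      | succ n ih =>
          show x n :: pr x n = l (n + 1)
          rw [ih]
    have hmem : ∀ n, a ∈ CP (l n) := by
      intro n
      induction n with
      | zero => exact ha
      | succ n ih =>
          have hgs := gs (l n)
          set c := RealCantorAux.splitPt (CP (l n)) with hc
          have hane : a ≠ c := fun he => hgs.1 (he ▸ ih)
          show a ∈ CP (decide (c < a) :: l n)
          rcases lt_or_gt_of_ne hane with hlt | hgt
          · have hdec : decide (c < a) = false := by
              simp [not_lt.2 (le_of_lt hlt)]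
            rw [hdec, hCP, RealCantorAux.cantorPiece_cons_false]
            exact ⟨ih, hlt⟩
          · have hdec : decide (c < a) = true := by simp [hgt]
            rw [hdec, hCP, RealCantorAux.cantorPiece_cons_true]
            exact ⟨ih, hgt⟩
    refine ⟨toLex x, ?_⟩
    apply Subtype.ext
    show f (ofLex (toLex x)) = a
    exact huniq x (f x) a (hf x) fun n => (hlp n) ▸ hmem n
  exact ⟨(StrictMono.orderIsoOfSurjective g hmono hsurj).symm⟩
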